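/- Let u ∈ V(G₁) be non-dominating and let ψ be a non-identity automorphism of G₂. The map λ on V(G₁*G₂) defined by λ(u,h) = (u, ψ(h)) for all h ∈ V(G₂) and λ(g,h) = (g,h) for g ≠ u, is an automorphism of G₁*G₂ if and only if for every h ∈ V(G₂), h and ψ(h) are false twins in G₂ (i.e., N(h) = N(ψ(h))). -/

import Mathlib

/-- The co-normal product of two simple graphs: distinct vertices are adjacent
iff the first coordinates are adjacent or the second coordinates are adjacent. -/
def conormal {α β : Type*} (G : SimpleGraph α) (H : SimpleGraph β) :
    SimpleGraph (α × β) where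
  Adj x y := x ≠ y ∧ (G.Adj x.1 y.1 ∨ H.Adj x.2 y.2)
  symm := ⟨fun x y ⟨hne, h⟩ => ⟨hne.symm, h.imp (·.symm) (·.symm)⟩⟩
  loopless := ⟨fun x ⟨h, _⟩ => h rfl⟩

theorem conormal_aut_nondominating_iff_falseTwins {α β : Type*} [DecidableEq α]
    (G₁ : SimpleGraph α) (G₂ : SimpleGraph β) (u : α)
    (hu : ∃ w : α, w ≠ u ∧ ¬ G₁.Adj u w) (ψ : G₂ ≃g G₂) (hψ : ∃ h : β, ψ h ≠ h) :
    (∃ lam : conormal G₁ G₂ ≃g conormal G₁ G₂,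
        ∀ p : α × β, lam p = if p.1 = u then (u, ψ p.2) else p) ↔
      ∀ h : β, G₂.neighborSet (ψ h) = G₂.neighborSet h := by
  obtain ⟨w, hwu, hadj⟩ := hu
  constructor
  · rintro ⟨lam, hlam⟩ h
    ext x
    have hm := lam.map_adj_iff (v := (u, h)) (w := (w, x))
    rw [hlam (u, h), hlam (w, x)] at hm
    simp only [if_pos rfl, if_neg hwu] at hm
    simp only [conormal, ne_eq, Prod.mk.injEq, not_and] at hm
    have huw : u ≠ w := fun e => hwu e.symm
    simp [huw, hadj] at hm
    simpa using hm
  · intro htw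
    have key : ∀ a b, G₂.Adj (ψ a) b ↔ G₂.Adj a b := by
      intro a b
      have := Set.ext_iff.mp (htw a) b
      simpa using this
    have key2 : ∀ a b, G₂.Adj a (ψ b) ↔ G₂.Adj a b := by
      intro a b
      rw [SimpleGraph.adj_comm, key, SimpleGraph.adj_comm]
    refine ⟨⟨⟨fun p => if p.1 = u then (u, ψ p.2) else p,
        fun p => if p.1 = u then (u, ψ.symm p.2) else p, ?_, ?_⟩, ?_⟩, ?_⟩
    · intro p
      by_cases hp : p.1 = u
      · simp only [hp, if_pos rfl]
        simp [Prod.ext_iff, hp.symm]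
      · simp [hp]
    · intro p
      by_cases hp : p.1 = u
      · simp only [hp, if_pos rfl]
        simp [Prod.ext_iff, hp.symm]
      · simp [hp]
    · rintro ⟨a, b⟩ ⟨c, d⟩
      by_cases ha : a = u <;> by_cases hc : c = u <;>
        simp [conormal, ha, hc, key, key2, Prod.ext_iff, ψ.map_adj_iff,
          Ne.symm, fun x => (Ne.symm · : u ≠ x → x ≠ u)]
    · intro p
      rfl
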